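/- Let E be a metric space, (P_t)_{t≥0} a semigroup of Markov kernels on E such that (t,x) ↦ P_t f(x) is jointly continuous on [0,∞) × E for every bounded continuous f, and each P_t (t>0) is strong Feller. Let N be a closed set with P_t(x,N) = 0 for all t > 0 and x ∈ E, and let Q_t be the restriction of P_t to F = E \ N. Then (t,x) ↦ Q_t f(x) is jointly continuous on [0,∞) × F for every bounded continuous f : F → ℝ. -/

import Mathlib

open MeasureTheory ProbabilityTheory
open scoped NNReal ENNReal Classical

private lemma bdd_integrable {α : Type*} [MeasurableSpace α] (μ : Measure α) [IsFiniteMeasure μ]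
    {f : α → ℝ} (hf : Measurable f) {C : ℝ} (hC : ∀ x, |f x| ≤ C) : Integrable f μ :=
  ⟨hf.aestronglyMeasurable, HasFiniteIntegral.of_bounded (C := C)
    (ae_of_all _ fun x => by simpa [Real.norm_eq_abs] using hC x)⟩

private lemma abs_integral_le_of_bdd {α : Type*} [MeasurableSpace α] (μ : Measure α)
    [IsProbabilityMeasure μ] {f : α → ℝ} {C : ℝ} (hC : ∀ x, |f x| ≤ C) :
    |∫ x, f x ∂μ| ≤ C := by
  have := norm_integral_le_of_norm_le_const (μ := μ) (f := f) (C := C)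
    (ae_of_all _ fun x => by simpa [Real.norm_eq_abs] using hC x)
  simpa [Real.norm_eq_abs, measure_univ] using this

private lemma integral_comp_bdd {α β γ : Type*} [MeasurableSpace α] [MeasurableSpace β]
    [MeasurableSpace γ] (κ : ProbabilityTheory.Kernel α β) (η : ProbabilityTheory.Kernel β γ)
    [IsMarkovKernel κ] [IsMarkovKernel η]
    (a : α) {f : γ → ℝ} (hf : Measurable f) {C : ℝ} (hC : ∀ x, |f x| ≤ C) :
    ∫ z, f z ∂((η ∘ₖ κ) a) = ∫ y, ∫ z, f z ∂(η y) ∂(κ a) := by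
  rw [Kernel.comp_eq_snd_compProd, Kernel.snd_apply,
    integral_map measurable_snd.aemeasurable hf.aestronglyMeasurable,
    ProbabilityTheory.integral_compProd
      (bdd_integrable ((κ ⊗ₖ Kernel.prodMkLeft α η) a) (f := fun p : β × γ => f p.2)
        (hf.comp measurable_snd) (C := C) (fun p => hC p.2))]
  simp

/-- If `(t,x) ↦ P_t f(x)` is jointly continuous for every bounded continuous `f`,
each `P_t` (`t > 0`) is strong Feller, and `N` is a closed `(P_t)`-negligible set, then
`(t,x) ↦ Q_t f(x)` is jointly continuous on `[0,∞) × F` for every bounded continuous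
`f : F → ℝ`, where `F = E \ N` and `Q_t` is the restriction of `P_t` to `F`. -/
theorem restricted_semigroup_jointly_continuous
    {E : Type*} [MetricSpace E] [MeasurableSpace E] [BorelSpace E]
    (P : ℝ≥0 → Kernel E E) (hMarkov : ∀ t, IsMarkovKernel (P t))
    (hP0 : P 0 = Kernel.id)
    (hCK : ∀ t s : ℝ≥0, P (t + s) = (P s) ∘ₖ (P t))
    (hJC : ∀ f : E → ℝ, Continuous f → (∃ C, ∀ x, |f x| ≤ C) →
      Continuous (fun p : ℝ≥0 × E => ∫ y, f y ∂(P p.1 p.2)))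
    (hSF : ∀ t : ℝ≥0, 0 < t → ∀ f : E → ℝ, Measurable f → (∃ C, ∀ x, |f x| ≤ C) →
      Continuous (fun x => ∫ y, f y ∂(P t x)))
    (N : Set E) (hNclosed : IsClosed N)
    (hNneg : ∀ t : ℝ≥0, 0 < t → ∀ x : E, P t x N = 0) :
    ∀ g : ↥(Nᶜ) → ℝ, Continuous g → (∃ C, ∀ x, |g x| ≤ C) →
      Continuous (fun p : ℝ≥0 × ↥(Nᶜ) =>
        ∫ y, (fun y : E => if h : y ∈ Nᶜ then g ⟨y, h⟩ else 0) y ∂(P p.1 (p.2 : E))) := by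
  haveI := hMarkov
  intro g hg hgC
  obtain ⟨C0, hgC⟩ := hgC
  set C : ℝ := max C0 0 with hCdef
  have hC0 : 0 ≤ C := le_max_right _ _
  set ft : E → ℝ := fun y : E => if h : y ∈ Nᶜ then g ⟨y, h⟩ else 0 with hftdef
  have hNc : IsOpen (Nᶜ) := hNclosed.isOpen_compl
  have hftm : Measurable ft := by
    exact Measurable.dite (f := fun y : ↥(Nᶜ) => g y) hg.measurable
      (g := fun _ : ↥(Nᶜᶜ) => (0 : ℝ)) measurable_const hNc.measurableSet
  have hftC : ∀ y, |ft y| ≤ C := by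
    intro y
    by_cases h : y ∈ Nᶜ
    · have hy : ft y = g ⟨y, h⟩ := dif_pos h
      rw [hy]
      exact (hgC _).trans (le_max_left _ _)
    · have hy : ft y = 0 := dif_neg h
      rw [hy, abs_zero]
      exact hC0
  set Φ : ℝ≥0 × E → ℝ := fun p => ∫ y, ft y ∂(P p.1 p.2) with hΦdef
  -- continuity at points with positive time
  have key_pos : ∀ p : ℝ≥0 × E, 0 < p.1 → ContinuousAt Φ p := by
    intro p hp
    set s : ℝ≥0 := p.1 / 2 with hsdef
    have hs : 0 < s := by positivity
    have hs2 : s < p.1 := by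
      rw [hsdef]
      exact NNReal.half_lt_self hp.ne'
    set h : E → ℝ := fun x => ∫ y, ft y ∂(P s x) with hhdef
    have hhc : Continuous h := hSF s hs ft hftm ⟨C, hftC⟩
    have hhb : ∀ x, |h x| ≤ C := fun x => abs_integral_le_of_bdd _ hftC
    have hΨ : Continuous (fun q : ℝ≥0 × E => ∫ y, h y ∂(P q.1 q.2)) := hJC h hhc ⟨C, hhb⟩
    have hcomp : ∀ q : ℝ≥0 × E, s < q.1 →
        Φ q = ∫ y, h y ∂(P (q.1 - s) q.2) := by
      intro q hq
      have hPq : P q.1 = (P s) ∘ₖ (P (q.1 - s)) := by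
        rw [← hCK (q.1 - s) s, tsub_add_cancel_of_le hq.le]
      rw [hΦdef]
      simp only
      rw [hPq]
      exact integral_comp_bdd _ _ _ hftm hftC
    have hc2 : Continuous (fun q : ℝ≥0 × E => ∫ y, h y ∂(P (q.1 - s) q.2)) := by
      exact hΨ.comp ((continuous_fst.sub continuous_const).prodMk continuous_snd)
    refine hc2.continuousAt.congr ?_
    have hmem : {q : ℝ≥0 × E | s < q.1} ∈ nhds p :=
      (isOpen_lt continuous_const continuous_fst).mem_nhds hs2
    exact Filter.eventuallyEq_of_mem hmem fun q hq => (hcomp q hq).symm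
  -- continuity at points (0, x₀) with x₀ ∈ Nᶜ
  have key_zero : ∀ x₀ : E, x₀ ∈ Nᶜ → ContinuousAt Φ (0, x₀) := by
    intro x₀ hx₀
    obtain ⟨ε, hε, hball⟩ := Metric.isOpen_iff.1 hNc x₀ hx₀
    set sC : Set E := Metric.closedBall x₀ (ε / 2) with hsCdef
    have hsCsub : sC ⊆ Nᶜ := fun y hy =>
      hball (Metric.mem_ball.2 (lt_of_le_of_lt (Metric.mem_closedBall.1 hy) (by linarith)))
    have hsCclosed : IsClosed sC := Metric.isClosed_closedBall
    -- restriction of g to sC as a continuous map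
    set gs : C(sC, ℝ) := ⟨fun y => g ⟨y.1, hsCsub y.2⟩,
      hg.comp (continuous_inclusion hsCsub)⟩ with hgsdef
    obtain ⟨Fc, hFc⟩ := ContinuousMap.exists_restrict_eq hsCclosed gs
    set f₀ : E → ℝ := fun y => max (-C) (min C (Fc y)) with hf₀def
    have hf₀c : Continuous f₀ := continuous_const.max (continuous_const.min Fc.continuous)
    have hf₀b : ∀ y, |f₀ y| ≤ C := by
      intro y
      rw [abs_le]
      constructor
      · exact le_max_left _ _
      · exact max_le (by linarith) (min_le_left _ _)
    have hf₀eq : ∀ y ∈ sC, f₀ y = ft y := by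
      intro y hy
      have hFy : Fc y = g ⟨y, hsCsub hy⟩ := by
        have := congrFun (congrArg ContinuousMap.toFun hFc) ⟨y, hy⟩
        simpa [ContinuousMap.restrict, hgsdef] using this
      have hfty : ft y = g ⟨y, hsCsub hy⟩ := dif_pos (hsCsub hy)
      have habs : |ft y| ≤ C := hftC y
      rw [abs_le] at habs
      rw [hf₀def]
      simp only [hFy, ← hfty]
      rw [min_eq_right habs.2, max_eq_right habs.1]
    set f₁ : E → ℝ := fun y => min 1 ((2 / ε) * dist y x₀) with hf₁def
    have hf₁c : Continuous f₁ :=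
      continuous_const.min (continuous_const.mul (continuous_id.dist continuous_const))
    have hf₁nonneg : ∀ y, 0 ≤ f₁ y := fun y =>
      le_min zero_le_one (by positivity)
    have hf₁b : ∀ y, |f₁ y| ≤ 1 := fun y => by
      rw [abs_le]
      exact ⟨by linarith [hf₁nonneg y], min_le_left _ _⟩
    have hf₁x₀ : f₁ x₀ = 0 := by
      simp [hf₁def]
    have hptwise : ∀ y, |ft y - f₀ y| ≤ 2 * C * f₁ y := by
      intro y
      by_cases hy : y ∈ sC
      · rw [hf₀eq y hy, sub_self, abs_zero]
        positivity
      · have hd : ε / 2 < dist y x₀ := by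
          rw [hsCdef, Metric.mem_closedBall, not_le] at hy
          exact hy
        have h1 : (1 : ℝ) ≤ (2 / ε) * dist y x₀ := by
          rw [div_mul_eq_mul_div, le_div_iff₀ hε]
          linarith
        have hf₁y : f₁ y = 1 := min_eq_left h1
        calc |ft y - f₀ y| ≤ |ft y| + |f₀ y| := abs_sub _ _
          _ ≤ C + C := add_le_add (hftC y) (hf₀b y)
          _ = 2 * C * f₁ y := by rw [hf₁y]; ring
    have hv : Continuous (fun q : ℝ≥0 × E => ∫ y, f₀ y ∂(P q.1 q.2)) :=
      hJC f₀ hf₀c ⟨C, hf₀b⟩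
    have hu : Continuous (fun q : ℝ≥0 × E => ∫ y, f₁ y ∂(P q.1 q.2)) :=
      hJC f₁ hf₁c ⟨1, hf₁b⟩
    set v : ℝ≥0 × E → ℝ := fun q => ∫ y, f₀ y ∂(P q.1 q.2) with hvdef
    set u : ℝ≥0 × E → ℝ := fun q => ∫ y, f₁ y ∂(P q.1 q.2) with hudef
    have hdiff : ∀ q : ℝ≥0 × E, |Φ q - v q| ≤ 2 * C * u q := by
      intro q
      have hint_ft : Integrable ft (P q.1 q.2) := bdd_integrable _ hftm hftC
      have hint_f₀ : Integrable f₀ (P q.1 q.2) :=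
        bdd_integrable _ hf₀c.measurable hf₀b
      have hint_f₁ : Integrable f₁ (P q.1 q.2) :=
        bdd_integrable _ hf₁c.measurable hf₁b
      have h1 : Φ q - v q = ∫ y, (ft y - f₀ y) ∂(P q.1 q.2) :=
        (integral_sub hint_ft hint_f₀).symm
      rw [h1]
      calc |∫ y, (ft y - f₀ y) ∂(P q.1 q.2)|
          ≤ ∫ y, |ft y - f₀ y| ∂(P q.1 q.2) := by
            simpa [Real.norm_eq_abs] using
              norm_integral_le_integral_norm (μ := P q.1 q.2) (fun y => ft y - f₀ y)
        _ ≤ ∫ y, 2 * C * f₁ y ∂(P q.1 q.2) := by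
            apply integral_mono (hint_ft.sub hint_f₀).abs (hint_f₁.const_mul _) hptwise
        _ = 2 * C * u q := integral_const_mul _ _
    -- value at (0, x₀)
    have hdirac : ∀ (f : E → ℝ), Measurable f → ∫ y, f y ∂(P 0 x₀) = f x₀ := by
      intro f hf
      rw [hP0]
      simp only [Kernel.id, Kernel.deterministic_apply, id]
      exact integral_dirac' f x₀ hf.stronglyMeasurable
    have hx₀sC : x₀ ∈ sC := Metric.mem_closedBall_self (by positivity)
    have hu0 : u (0, x₀) = 0 := by
      rw [hudef]
      simp only
      rw [hdirac f₁ hf₁c.measurable, hf₁x₀]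
    have hv0 : v (0, x₀) = Φ (0, x₀) := by
      rw [hvdef, hΦdef]
      simp only
      rw [hdirac f₀ hf₀c.measurable, hdirac ft hftm, hf₀eq x₀ hx₀sC]
    -- squeeze
    have hl : Filter.Tendsto (fun q => v q - 2 * C * u q) (nhds (0, x₀))
        (nhds (Φ (0, x₀))) := by
      have hcont : Continuous (fun q : ℝ≥0 × E => v q - 2 * C * u q) :=
        hv.sub ((continuous_const : Continuous fun _ : ℝ≥0 × E => 2 * C).mul hu)
      have := hcont.tendsto (0, x₀)
      simpa [hu0, hv0] using this
    have hr : Filter.Tendsto (fun q => v q + 2 * C * u q) (nhds (0, x₀))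
        (nhds (Φ (0, x₀))) := by
      have hcont : Continuous (fun q : ℝ≥0 × E => v q + 2 * C * u q) :=
        hv.add ((continuous_const : Continuous fun _ : ℝ≥0 × E => 2 * C).mul hu)
      have := hcont.tendsto (0, x₀)
      simpa [hu0, hv0] using this
    have hlow : ∀ q, v q - 2 * C * u q ≤ Φ q := by
      intro q
      have := (abs_le.1 (hdiff q)).1
      linarith
    have hhigh : ∀ q, Φ q ≤ v q + 2 * C * u q := by
      intro q
      have := (abs_le.1 (hdiff q)).2
      linarith
    exact tendsto_of_tendsto_of_tendsto_of_le_of_le hl hr hlow hhigh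
  -- conclusion
  rw [continuous_iff_continuousAt]
  intro p
  have hemb : Continuous (fun p : ℝ≥0 × ↥(Nᶜ) => ((p.1, (p.2 : E)) : ℝ≥0 × E)) :=
    continuous_fst.prodMk (continuous_subtype_val.comp continuous_snd)
  have hΦat : ContinuousAt Φ (p.1, (p.2 : E)) := by
    rcases eq_or_lt_of_le (zero_le : (0 : ℝ≥0) ≤ p.1) with h | h
    · have : (p.1, (p.2 : E)) = ((0 : ℝ≥0), (p.2 : E)) := by rw [← h]
      rw [this]
      exact key_zero _ p.2.2
    · exact key_pos _ h
  have h2 : ContinuousAt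
      (Φ ∘ (fun q : ℝ≥0 × ↥(Nᶜ) => ((q.1, (q.2 : E)) : ℝ≥0 × E))) p :=
    ContinuousAt.comp hΦat hemb.continuousAt
  exact h2
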